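/- Let ℓ ∈ ℕ and suppose some colored ℓ-ball of (T, φ) is special. Then: (a) for every vertex x there exists M ∈ ℕ such that some vertex w with d(x, w) ≤ M has [B_ℓ(w)] special, and M can be chosen depending only on the equivalence class [B_ℓ(x)] (if [B_ℓ(x)] = [B_ℓ(x')], the same M works for x'); (b) if moreover the alphabet A is finite, then there exists N ∈ ℕ such that for every vertex x there is a vertex w with d(x, w) ≤ N and [B_ℓ(w)] special. -/

import Mathlib

open SimpleGraph

/-- Equivalence of colored `n`-balls around `x` and `y`: a graph isomorphism between the
induced subgraphs on the balls, sending center to center and preserving the coloring. -/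
def BallEquiv {V A : Type*} (T : SimpleGraph V) (φ : V → A) (n : ℕ) (x y : V) : Prop :=
  ∃ f : {v : V // T.dist x v ≤ n} ≃ {v : V // T.dist y v ≤ n},
    ((f ⟨x, by simp [SimpleGraph.dist_self]⟩ : {v : V // T.dist y v ≤ n}) : V) = y ∧
    (∀ u w : {v : V // T.dist x v ≤ n}, T.Adj (u : V) (w : V) ↔ T.Adj (f u : V) (f w : V)) ∧
    ∀ v : {v : V // T.dist x v ≤ n}, φ (f v : V) = φ (v : V)

/-- Two vertices are in the same class if a color-preserving automorphism of `T`
sends one to the other. -/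
def SameClass {V A : Type*} (T : SimpleGraph V) (φ : V → A) (x y : V) : Prop :=
  ∃ g : V ≃ V, (∀ u w : V, T.Adj (g u) (g w) ↔ T.Adj u w) ∧ g x = y ∧ ∀ v, φ (g v) = φ v

/-- Subword complexity: the number of equivalence classes of colored `n`-balls. -/
noncomputable def ballComplexity {V A : Type*} (T : SimpleGraph V) (φ : V → A) (n : ℕ) : ℕ :=
  Nat.card (Quot (BallEquiv T φ n))

/-- A coloring is periodic if it is invariant under a subgroup of the automorphism group
of `T` having finitely many orbits on vertices. -/
def IsPeriodicColoring {V A : Type*} (T : SimpleGraph V) (φ : V → A) : Prop :=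
  ∃ Γ : Subgroup (Equiv.Perm V),
    (∀ γ ∈ Γ, ∀ u w : V, T.Adj (γ u) (γ w) ↔ T.Adj u w) ∧
    (∀ γ ∈ Γ, ∀ v, φ (γ v) = φ v) ∧
    Finite (Quot (fun x y : V => ∃ γ ∈ Γ, γ x = y))

/-- The colored `n`-ball around `x` is special. -/
def IsSpecial {V A : Type*} (T : SimpleGraph V) (φ : V → A) (n : ℕ) (x : V) : Prop :=
  ∃ y z : V, BallEquiv T φ n x y ∧ BallEquiv T φ n x z ∧ ¬ BallEquiv T φ (n + 1) y z

/-- The type set of a vertex. -/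
def TypeSet {V A : Type*} (T : SimpleGraph V) (φ : V → A) (x : V) : Set ℕ :=
  {n : ℕ | IsSpecial T φ n x}

/-- The maximal type of a vertex of bounded type (`-1` if the type set is empty). -/
noncomputable def maxType {V A : Type*} (T : SimpleGraph V) (φ : V → A) (x : V) : ℤ :=
  sSup (insert (-1) ((fun n : ℕ => (n : ℤ)) '' TypeSet T φ x))

/-- The coloring is Sturmian if its subword complexity is `n + 2`. -/
def IsSturmian {V A : Type*} (T : SimpleGraph V) (φ : V → A) : Prop :=
  ∀ n : ℕ, ballComplexity T φ n = n + 2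

/-- Eventually periodic coloring. -/
def IsEventuallyPeriodic {V A : Type*} (T : SimpleGraph V) (φ : V → A) : Prop :=
  ∃ K : Set V, K.Nonempty ∧ K.Finite ∧ (T.induce K).Connected ∧
    ∀ v : (Kᶜ : Set V), ∃ ψ : V → A, IsPeriodicColoring T ψ ∧
      ∀ w : (Kᶜ : Set V), (T.induce (Kᶜ : Set V)).Reachable v w → ψ (w : V) = φ (w : V)

/-- The vertex set of the `n`-branch from `x` towards its neighbor `x'`. -/
def branchSet {V : Type*} (T : SimpleGraph V) (n : ℕ) (x x' : V) : Set V :=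
  insert x {y : V | T.dist x y ≤ n ∧ T.dist y x' < T.dist y x}

/-- Equivalence of colored `n`-branches. -/
def BranchEquiv {V A : Type*} (T : SimpleGraph V) (φ : V → A) (n : ℕ)
    (x x' y y' : V) : Prop :=
  ∃ f : (branchSet T n x x') ≃ (branchSet T n y y'),
    ((f ⟨x, Set.mem_insert x _⟩ : (branchSet T n y y')) : V) = y ∧
    (∀ u w : (branchSet T n x x'), T.Adj (u : V) (w : V) ↔ T.Adj (f u : V) (f w : V)) ∧
    ∀ v : (branchSet T n x x'), φ (f v : V) = φ (v : V)

/-- A coloring of `K` appears exactly once if the only connected subgraph of `T`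
color-isomorphic to it is `K` itself. -/
def AppearsOnce {V A : Type*} (T : SimpleGraph V) (φ : V → A) (K : Set V) : Prop :=
  ∀ K' : Set V, (T.induce K').Connected →
    (∃ f : K ≃ K', (∀ u w : K, T.Adj (u : V) (w : V) ↔ T.Adj (f u : V) (f w : V)) ∧
      ∀ v : K, φ (f v : V) = φ (v : V)) → K' = K

namespace Stmt7Aux


variable {V : Type*} {T : SimpleGraph V}

/-- A walk of length `dist` is a path. -/
lemma isPath_of_length_eq_dist : ∀ {u v : V} (W : T.Walk u v),
    W.length = T.dist u v → W.IsPath := by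
  classical
  intro u v W
  induction W with
  | nil => intro _; simp
  | @cons u a v h W' ih =>
    intro hlen
    rw [Walk.length_cons] at hlen
    have hav : T.dist a v ≤ W'.length := SimpleGraph.dist_le W'
    obtain ⟨Q, hQ⟩ := (W'.reachable).exists_walk_length_eq_dist
    have huv : T.dist u v ≤ T.dist a v + 1 := by
      have := SimpleGraph.dist_le (Walk.cons h Q)
      rw [Walk.length_cons, hQ] at this
      omega
    have hW'len : W'.length = T.dist a v := by omega
    have hW'path := ih hW'len
    rw [Walk.cons_isPath_iff]
    refine ⟨hW'path, fun hu => ?_⟩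
    have hune : u ≠ a := fun he => T.irrefl (he ▸ h)
    have htake := congrArg Walk.length (W'.take_spec hu)
    rw [Walk.length_append] at htake
    have h1 : T.dist u v ≤ (W'.dropUntil u hu).length := SimpleGraph.dist_le _
    have h2 : 1 ≤ (W'.takeUntil u hu).length := by
      by_contra h2
      exact hune ((Walk.eq_of_length_eq_zero (p := W'.takeUntil u hu) (by omega)).symm)
    omega

/-- geodesic paths exist in connected graphs -/
lemma exists_geodesic (hc : T.Connected) (u v : V) :
    ∃ P : T.Walk u v, P.IsPath ∧ P.length = T.dist u v := by
  classical
  obtain ⟨W, hW⟩ := hc.exists_walk_length_eq_dist u v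
  have hlen : W.bypass.length = T.dist u v :=
    le_antisymm (hW ▸ W.length_bypass_le) (SimpleGraph.dist_le _)
  exact ⟨W.bypass, W.bypass_isPath, hlen⟩

/-- In a tree, a vertex between `u` and `v` is within `max (dist x u) (dist x v)` of any `x`. -/
lemma dist_le_max_of_between (hc : T.Connected) (ha : T.IsAcyclic) {u v p : V} (x : V)
    (h : T.dist u p + T.dist p v = T.dist u v) :
    T.dist x p ≤ max (T.dist x u) (T.dist x v) := by
  classical
  obtain ⟨Su, hSup, hSul⟩ := exists_geodesic hc u p
  obtain ⟨Sv, hSvp, hSvl⟩ := exists_geodesic hc p v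
  obtain ⟨P, hPp, hPl⟩ := exists_geodesic hc x u
  obtain ⟨Q, hQp, hQl⟩ := exists_geodesic hc x v
  set S : T.Walk u v := Su.append Sv with hS
  have hSlen : S.length = T.dist u v := by
    rw [hS, Walk.length_append, hSul, hSvl, h]
  have hSpath : S.IsPath := isPath_of_length_eq_dist S hSlen
  set R : T.Walk u v := (P.reverse.append Q).bypass with hR
  have hSR : S = R := by
    have := (SimpleGraph.isAcyclic_iff_path_unique.mp ha) ⟨S, hSpath⟩ ⟨R, Walk.bypass_isPath _⟩
    exact congrArg Subtype.val this
  have hpS : p ∈ S.support := by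
    rw [hS]
    exact Walk.subset_support_append_left _ _ (Su.end_mem_support)
  rw [hSR] at hpS
  have hpPQ : p ∈ (P.reverse.append Q).support := Walk.support_bypass_subset _ hpS
  rcases (Walk.mem_support_append_iff _ _).mp hpPQ with hp | hp
  · rw [Walk.support_reverse, List.mem_reverse] at hp
    have h1 : T.dist x p ≤ (P.takeUntil p hp).length := SimpleGraph.dist_le _
    have h2 := Walk.length_takeUntil_le P hp
    exact le_max_of_le_left (by omega)
  · have h1 : T.dist x p ≤ (Q.takeUntil p hp).length := SimpleGraph.dist_le _
    have h2 := Walk.length_takeUntil_le Q hp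
    exact le_max_of_le_right (by omega)



/-- Transfer a walk staying in the ball through an adjacency-preserving map. -/
lemma walk_transfer {n : ℕ} {x y : V}
    (F : {v : V // T.dist x v ≤ n} ≃ {v : V // T.dist y v ≤ n})
    (hadj : ∀ u w : {v : V // T.dist x v ≤ n},
      T.Adj (u : V) (w : V) ↔ T.Adj (F u : V) (F w : V)) :
    ∀ {u v : V} (W : T.Walk u v),
      (∀ p ∈ W.support, T.dist x p ≤ n) → ∀ (hu : T.dist x u ≤ n) (hv : T.dist x v ≤ n),
      ∃ W' : T.Walk (F ⟨u, hu⟩ : V) (F ⟨v, hv⟩ : V), W'.length = W.length := by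
  intro u v W
  induction W with
  | nil => intro _ hu hv; exact ⟨Walk.nil, rfl⟩
  | @cons u a v h W' ih =>
    intro hs hu hv
    have ha' : T.dist x a ≤ n := hs a (by simp [Walk.support_cons])
    obtain ⟨W'', hl⟩ := ih (fun p hp => hs p (by simp [Walk.support_cons, hp])) ha' hv
    have hadj' : T.Adj (F ⟨u, hu⟩ : V) (F ⟨a, ha'⟩ : V) := (hadj ⟨u, hu⟩ ⟨a, ha'⟩).mp h
    exact ⟨Walk.cons hadj' W'', by simp [hl]⟩

lemma ball_iso_dist_le (hc : T.Connected) (ha : T.IsAcyclic)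
    {n : ℕ} {x y : V}
    (F : {v : V // T.dist x v ≤ n} ≃ {v : V // T.dist y v ≤ n})
    (hadj : ∀ u w : {v : V // T.dist x v ≤ n},
      T.Adj (u : V) (w : V) ↔ T.Adj (F u : V) (F w : V))
    (u v : {v : V // T.dist x v ≤ n}) :
    T.dist (F u : V) (F v : V) ≤ T.dist (u : V) (v : V) := by
  classical
  obtain ⟨W, hW⟩ := hc.exists_walk_length_eq_dist (u : V) (v : V)
  have hs : ∀ p ∈ W.support, T.dist x p ≤ n := by
    intro p hp
    have h1 : T.dist (u : V) p ≤ (W.takeUntil p hp).length := SimpleGraph.dist_le _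
    have h2 : T.dist p (v : V) ≤ (W.dropUntil p hp).length := SimpleGraph.dist_le _
    have htake := congrArg Walk.length (W.take_spec hp)
    rw [Walk.length_append] at htake
    have h4 := hc.dist_triangle (u := (u : V)) (v := p) (w := (v : V))
    have heq : T.dist (u : V) p + T.dist p (v : V) = T.dist (u : V) (v : V) := by omega
    have := dist_le_max_of_between hc ha x heq
    exact le_trans this (max_le u.2 v.2)
  obtain ⟨W', hW'⟩ := walk_transfer F hadj W hs u.2 v.2
  have := SimpleGraph.dist_le W'
  rw [hW', hW] at this
  simpa using this

lemma ball_iso_dist_eq (hc : T.Connected) (ha : T.IsAcyclic)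
    {n : ℕ} {x y : V}
    (F : {v : V // T.dist x v ≤ n} ≃ {v : V // T.dist y v ≤ n})
    (hadj : ∀ u w : {v : V // T.dist x v ≤ n},
      T.Adj (u : V) (w : V) ↔ T.Adj (F u : V) (F w : V))
    (u v : {v : V // T.dist x v ≤ n}) :
    T.dist (F u : V) (F v : V) = T.dist (u : V) (v : V) := by
  refine le_antisymm (ball_iso_dist_le hc ha F hadj u v) ?_
  have hadj' : ∀ u w : {v : V // T.dist y v ≤ n},
      T.Adj (u : V) (w : V) ↔ T.Adj (F.symm u : V) (F.symm w : V) := by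
    intro u w
    have := hadj (F.symm u) (F.symm w)
    simp only [Equiv.apply_symm_apply] at this
    exact this.symm
  have := ball_iso_dist_le hc ha F.symm hadj' (F u) (F v)
  simpa using this


section BallAPI

variable {V A : Type*} {T : SimpleGraph V} {φ : V → A}

lemma ballEquiv_refl (n : ℕ) (x : V) : BallEquiv T φ n x x :=
  ⟨Equiv.refl _, rfl, fun _ _ => Iff.rfl, fun _ => rfl⟩

lemma ballEquiv_symm {n : ℕ} {x y : V} (h : BallEquiv T φ n x y) : BallEquiv T φ n y x := by
  obtain ⟨f, hcen, hadj, hcol⟩ := h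
  have hx : T.dist x x ≤ n := by simp [SimpleGraph.dist_self]
  have hy : T.dist y y ≤ n := by simp [SimpleGraph.dist_self]
  have h1 : f ⟨x, hx⟩ = ⟨y, hy⟩ := Subtype.ext hcen
  refine ⟨f.symm, ?_, ?_, ?_⟩
  · rw [← h1, Equiv.symm_apply_apply]
  · intro u w
    have := hadj (f.symm u) (f.symm w)
    simp only [Equiv.apply_symm_apply] at this
    exact this.symm
  · intro v
    have := hcol (f.symm v)
    rw [Equiv.apply_symm_apply] at this
    exact this.symm

lemma ballEquiv_trans {n : ℕ} {x y z : V} (h1 : BallEquiv T φ n x y)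
    (h2 : BallEquiv T φ n y z) : BallEquiv T φ n x z := by
  obtain ⟨f, hcen1, hadj1, hcol1⟩ := h1
  obtain ⟨g, hcen2, hadj2, hcol2⟩ := h2
  have hx : T.dist x x ≤ n := by simp [SimpleGraph.dist_self]
  have hy : T.dist y y ≤ n := by simp [SimpleGraph.dist_self]
  refine ⟨f.trans g, ?_, ?_, ?_⟩
  · have h1' : f ⟨x, hx⟩ = ⟨y, hy⟩ := Subtype.ext hcen1
    simp only [Equiv.trans_apply, h1']
    exact hcen2
  · intro u w
    exact (hadj1 u w).trans (hadj2 (f u) (f w))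
  · intro v
    exact (hcol2 (f v)).trans (hcol1 v)

lemma ballEquiv_equivalence (n : ℕ) : Equivalence (BallEquiv T φ n) :=
  ⟨ballEquiv_refl n, ballEquiv_symm, ballEquiv_trans⟩

lemma isSpecial_congr {l : ℕ} {x x' : V} (h : BallEquiv T φ l x x')
    (hs : IsSpecial T φ l x) : IsSpecial T φ l x' := by
  obtain ⟨y, z, h1, h2, h3⟩ := hs
  exact ⟨y, z, ballEquiv_trans (ballEquiv_symm h) h1,
    ballEquiv_trans (ballEquiv_symm h) h2, h3⟩

lemma ballEquiv_upgrade {l : ℕ} {x x' : V} (hns : ¬ IsSpecial T φ l x')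
    (h : BallEquiv T φ l x x') : BallEquiv T φ (l + 1) x x' := by
  unfold IsSpecial at hns
  push_neg at hns
  exact ballEquiv_symm (hns x' x (ballEquiv_refl l x') (ballEquiv_symm h))

/-- Restriction of an `(n+1)`-ball equivalence to an `n`-ball equivalence around a
neighbor of the center. -/
lemma ballEquiv_step (hc : T.Connected) (ha : T.IsAcyclic) {n : ℕ} {x y u : V}
    (h : BallEquiv T φ (n + 1) x y) (hxu : T.Adj x u) :
    ∃ u' : V, T.Adj y u' ∧ BallEquiv T φ n u u' := by
  obtain ⟨F, hcen, hadj, hcol⟩ := h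
  have hdxx : T.dist x x ≤ n + 1 := by simp [SimpleGraph.dist_self]
  have hdxu1 : T.dist x u ≤ 1 := by
    have := SimpleGraph.dist_le (Walk.cons hxu Walk.nil)
    simpa using this
  have hxu' : T.dist x u ≤ n + 1 := le_trans hdxu1 (by omega)
  have hiso := ball_iso_dist_eq hc ha F hadj
  set u' : V := (F ⟨u, hxu'⟩ : V) with hu'
  have hadjyu' : T.Adj y u' := by
    have := (hadj ⟨x, hdxx⟩ ⟨u, hxu'⟩).mp hxu
    rwa [hcen] at this
  have hyFv : ∀ v : {v : V // T.dist x v ≤ n + 1}, T.dist y (F v : V) = T.dist x (v : V) := by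
    intro v
    have := hiso ⟨x, hdxx⟩ v
    rwa [hcen] at this
  refine ⟨u', hadjyu', ?_⟩
  have pf1 : ∀ v : {v : V // T.dist u v ≤ n}, T.dist x (v : V) ≤ n + 1 := fun v =>
    le_trans (hc.dist_triangle (v := u)) (by omega)
  have pf1' : ∀ v' : {v : V // T.dist u' v ≤ n}, T.dist y (v' : V) ≤ n + 1 := by
    intro v'
    have h1 : T.dist y u' ≤ 1 := by
      have := SimpleGraph.dist_le (Walk.cons hadjyu' Walk.nil)
      simpa using this
    have := hc.dist_triangle (u := y) (v := u') (w := (v' : V))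
    omega
  have pf2 : ∀ v : {v : V // T.dist u v ≤ n}, T.dist u' (F ⟨(v : V), pf1 v⟩ : V) ≤ n := by
    intro v
    rw [hu', hiso ⟨u, hxu'⟩ ⟨(v : V), pf1 v⟩]
    exact v.2
  have pf2' : ∀ v' : {v : V // T.dist u' v ≤ n},
      T.dist u (F.symm ⟨(v' : V), pf1' v'⟩ : V) ≤ n := by
    intro v'
    have := hiso ⟨u, hxu'⟩ (F.symm ⟨(v' : V), pf1' v'⟩)
    rw [Equiv.apply_symm_apply] at this
    rw [← this]
    exact v'.2
  refine ⟨⟨fun v => ⟨(F ⟨(v : V), pf1 v⟩ : V), pf2 v⟩,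
          fun v' => ⟨(F.symm ⟨(v' : V), pf1' v'⟩ : V), pf2' v'⟩, ?_, ?_⟩, ?_, ?_, ?_⟩
  · intro v
    apply Subtype.ext
    simp
  · intro v'
    apply Subtype.ext
    simp
  · rfl
  · intro a b
    exact hadj ⟨(a : V), pf1 a⟩ ⟨(b : V), pf1 b⟩
  · intro v
    exact hcol ⟨(v : V), pf1 v⟩

lemma exists_adj_closer (hc : T.Connected) {w z : V} {m : ℕ} (h : T.dist w z = m + 1) :
    ∃ u : V, T.Adj w u ∧ T.dist u z = m := by
  obtain ⟨W, hW⟩ := hc.exists_walk_length_eq_dist w z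
  rw [h] at hW
  cases W with
  | nil => simp at hW
  | cons hadj W' =>
    rename_i b
    refine ⟨b, hadj, ?_⟩
    rw [Walk.length_cons] at hW
    have h1 : T.dist b z ≤ m := by
      have := SimpleGraph.dist_le W'
      omega
    obtain ⟨Q, hQ⟩ := (W'.reachable).exists_walk_length_eq_dist
    have h2 : T.dist w z ≤ T.dist b z + 1 := by
      have := SimpleGraph.dist_le (Walk.cons hadj Q)
      rw [Walk.length_cons, hQ] at this
      omega
    omega

/-- The key transport lemma: a special vertex within distance `m` of `w` yields a special
vertex within distance `m` of any `w'` that is `l`-ball equivalent to `w`. -/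
lemma main_transport (hc : T.Connected) (ha : T.IsAcyclic) {l : ℕ} :
    ∀ (m : ℕ) (w w' z : V), T.dist w z ≤ m → BallEquiv T φ l w w' → IsSpecial T φ l z →
      ∃ w'' : V, T.dist w' w'' ≤ m ∧ IsSpecial T φ l w'' := by
  intro m
  induction m with
  | zero =>
    intro w w' z hd heq hz
    have hwz : w = z := ((hc.preconnected w z).dist_eq_zero_iff).mp (Nat.le_zero.mp hd)
    exact ⟨w', by simp [SimpleGraph.dist_self], isSpecial_congr heq (hwz ▸ hz)⟩
  | succ m ih =>
    intro w w' z hd heq hz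
    by_cases hsp' : IsSpecial T φ l w'
    · exact ⟨w', by simp [SimpleGraph.dist_self], hsp'⟩
    by_cases hle : T.dist w z ≤ m
    · obtain ⟨w'', h1, h2⟩ := ih w w' z hle heq hz
      exact ⟨w'', le_trans h1 (by omega), h2⟩
    have hdist : T.dist w z = m + 1 := by omega
    have h1 : BallEquiv T φ (l + 1) w w' := ballEquiv_upgrade hsp' heq
    obtain ⟨u, hadj, hdu⟩ := exists_adj_closer hc hdist
    obtain ⟨u', hadj', hequ⟩ := ballEquiv_step hc ha h1 hadj
    obtain ⟨w'', hdw, hsw⟩ := ih u u' z (le_of_eq hdu) hequ hz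
    refine ⟨w'', ?_, hsw⟩
    have ht := hc.dist_triangle (u := w') (v := u') (w := w'')
    have h2 : T.dist w' u' ≤ 1 := by
      have := SimpleGraph.dist_le (Walk.cons hadj' Walk.nil)
      simpa using this
    omega

end BallAPI

section Counting

variable {V A : Type*} {T : SimpleGraph V} {φ : V → A}

lemma nbr_finite {k : ℕ} (hk : 2 ≤ k) (hreg : ∀ v : V, (T.neighborSet v).ncard = k)
    (v : V) : (T.neighborSet v).Finite := by
  by_contra h
  have h2 := hreg v
  rw [Set.Infinite.ncard (by simpa using h)] at h2
  omega

lemma ball_bound (hc : T.Connected) {k : ℕ} (hk : 2 ≤ k)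
    (hreg : ∀ v : V, (T.neighborSet v).ncard = k) :
    ∀ (n : ℕ) (x : V), {v : V | T.dist x v ≤ n}.Finite ∧
      {v : V | T.dist x v ≤ n}.ncard ≤ (k + 1) ^ n := by
  intro n
  induction n with
  | zero =>
    intro x
    have hset : {v : V | T.dist x v ≤ 0} = {x} := by
      ext v
      simp only [Set.mem_setOf_eq, Set.mem_singleton_iff, Nat.le_zero]
      rw [(hc.preconnected x v).dist_eq_zero_iff]
      exact eq_comm
    rw [hset]
    exact ⟨Set.finite_singleton x, by simp⟩
  | succ n ih =>
    intro x
    classical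
    obtain ⟨hfin, hcard⟩ := ih x
    have hsub : {v : V | T.dist x v ≤ n + 1} ⊆
        ⋃ p ∈ {v : V | T.dist x v ≤ n}, ({p} ∪ T.neighborSet p) := by
      intro u hu
      simp only [Set.mem_setOf_eq] at hu
      by_cases hd : T.dist x u ≤ n
      · exact Set.mem_biUnion hd (by simp)
      · have hd1 : T.dist u x = n + 1 := by rw [SimpleGraph.dist_comm]; omega
        obtain ⟨p, hadj, hdp⟩ := exists_adj_closer hc hd1
        refine Set.mem_biUnion (show p ∈ {v : V | T.dist x v ≤ n} from ?_) ?_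
        · simp only [Set.mem_setOf_eq]
          rw [SimpleGraph.dist_comm]
          omega
        · exact Or.inr ((T.mem_neighborSet p u).mpr hadj.symm)
    have hfin' : (⋃ p ∈ {v : V | T.dist x v ≤ n}, ({p} ∪ T.neighborSet p)).Finite :=
      hfin.biUnion (fun p _ => (Set.finite_singleton p).union (nbr_finite hk hreg p))
    refine ⟨hfin'.subset hsub, ?_⟩
    have key : (⋃ p ∈ {v : V | T.dist x v ≤ n}, ({p} ∪ T.neighborSet p)).ncard ≤
        {v : V | T.dist x v ≤ n}.ncard * (k + 1) := by
      have hset : (⋃ p ∈ {v : V | T.dist x v ≤ n}, ({p} ∪ T.neighborSet p)) =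
          ↑(hfin.toFinset.biUnion (fun p => insert p ((nbr_finite hk hreg p).toFinset))) := by
        ext w
        simp [Set.Finite.mem_toFinset]
      rw [hset, Set.ncard_coe_finset]
      refine le_trans Finset.card_biUnion_le ?_
      have hbnd : ∀ p ∈ hfin.toFinset,
          (insert p ((nbr_finite hk hreg p).toFinset)).card ≤ k + 1 := by
        intro p _
        refine le_trans (Finset.card_insert_le _ _) ?_
        have hcardp : ((nbr_finite hk hreg p).toFinset).card = k := by
          rw [← Set.ncard_coe_finset, Set.Finite.coe_toFinset]
          exact hreg p
        omega
      have := Finset.sum_le_card_nsmul hfin.toFinset _ (k + 1) hbnd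
      rw [smul_eq_mul] at this
      rwa [Set.ncard_eq_toFinset_card _ hfin]
    calc {v : V | T.dist x v ≤ n + 1}.ncard
        ≤ (⋃ p ∈ {v : V | T.dist x v ≤ n}, ({p} ∪ T.neighborSet p)).ncard :=
          Set.ncard_le_ncard hsub hfin'
      _ ≤ {v : V | T.dist x v ≤ n}.ncard * (k + 1) := key
      _ ≤ (k + 1) ^ n * (k + 1) := Nat.mul_le_mul_right _ hcard
      _ = (k + 1) ^ (n + 1) := (pow_succ (k + 1) n).symm

lemma ball_embed (hc : T.Connected) {k : ℕ} (hk : 2 ≤ k)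
    (hreg : ∀ v : V, (T.neighborSet v).ncard = k) (l : ℕ) (x : V) :
    ∃ f : {v : V // T.dist x v ≤ l} → Fin ((k + 1) ^ l), Function.Injective f := by
  obtain ⟨hfin, hcard⟩ := ball_bound hc hk hreg l x
  haveI : Finite {v : V // T.dist x v ≤ l} := hfin.to_subtype
  haveI := Fintype.ofFinite {v : V // T.dist x v ≤ l}
  have hcard2 : Fintype.card {v : V // T.dist x v ≤ l} ≤ (k + 1) ^ l := by
    rw [← Nat.card_eq_fintype_card]
    have : Nat.card {v : V // T.dist x v ≤ l} = {v : V | T.dist x v ≤ l}.ncard :=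
      Nat.card_coe_set_eq {v : V | T.dist x v ≤ l}
    omega
  exact ⟨((Fintype.equivFin _).toEmbedding.trans (Fin.castLEEmb hcard2)),
    Function.Embedding.injective _⟩

lemma finite_quot (hc : T.Connected) {k : ℕ} (hk : 2 ≤ k)
    (hreg : ∀ v : V, (T.neighborSet v).ncard = k) (l : ℕ) [Finite A] :
    Finite (Quot (BallEquiv T φ l)) := by
  classical
  set s := (k + 1) ^ l with hs
  let C := Fin s × (Fin s → Option A) × (Fin s → Fin s → Bool)
  let codes : V → Set C := fun x =>
    {p | ∃ f : {v : V // T.dist x v ≤ l} → Fin s, Function.Injective f ∧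
      f ⟨x, by simp [SimpleGraph.dist_self]⟩ = p.1 ∧
      (∀ v, p.2.1 (f v) = some (φ (v : V))) ∧
      (∀ j, (∀ v, f v ≠ j) → p.2.1 j = none) ∧
      (∀ v w, p.2.2 (f v) (f w) = true ↔ T.Adj (v : V) (w : V))}
  have mono : ∀ x y : V, BallEquiv T φ l x y → codes y ⊆ codes x := by
    rintro x y ⟨F, hcen, hadj, hcol⟩ p ⟨g, hginj, hgcen, hgcol, hgnone, hgadj⟩
    refine ⟨g ∘ F, hginj.comp F.injective, ?_, ?_, ?_, ?_⟩
    · have hF : F ⟨x, by simp [SimpleGraph.dist_self]⟩ = ⟨y, by simp [SimpleGraph.dist_self]⟩ :=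
        Subtype.ext hcen
      simp only [Function.comp_apply, hF]
      exact hgcen
    · intro v
      exact (hgcol (F v)).trans (congrArg some (hcol v))
    · intro j hj
      refine hgnone j (fun v' => ?_)
      have : v' = F (F.symm v') := (F.apply_symm_apply v').symm
      rw [this]
      exact hj (F.symm v')
    · intro v w
      exact (hgadj (F v) (F w)).trans (hadj v w).symm
  have inv : ∀ x y : V, BallEquiv T φ l x y → codes x = codes y := fun x y h =>
    le_antisymm (mono y x (ballEquiv_symm h)) (mono x y h)
  have nonempty : ∀ x : V, (codes x).Nonempty := by
    intro x
    obtain ⟨f, hf⟩ := ball_embed hc hk hreg l x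
    refine ⟨⟨f ⟨x, by simp [SimpleGraph.dist_self]⟩,
      fun j => if h : ∃ v, f v = j then some (φ ((Classical.choose h : _) : V)) else none,
      fun i j => if (∃ v w, f v = i ∧ f w = j ∧ T.Adj (v : V) (w : V)) then true else false⟩,
      f, hf, rfl, ?_, ?_, ?_⟩
    · intro v
      have h : ∃ v', f v' = f v := ⟨v, rfl⟩
      simp only [dif_pos h]
      congr 1
      have := Classical.choose_spec h
      rw [hf this]
    · intro j hj
      have h : ¬ ∃ v, f v = j := by
        rintro ⟨v, hv⟩
        exact hj v hv
      simp only [dif_neg h]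
    · intro v w
      constructor
      · intro h
        dsimp only at h
        by_cases hP : ∃ v' w', f v' = f v ∧ f w' = f w ∧ T.Adj (v' : V) (w' : V)
        · obtain ⟨v', w', h1, h2, h3⟩ := hP
          rwa [hf h1, hf h2] at h3
        · rw [if_neg hP] at h
          exact absurd h Bool.false_ne_true
      · intro h
        have hP : ∃ v' w', f v' = f v ∧ f w' = f w ∧ T.Adj (v' : V) (w' : V) :=
          ⟨v, w, rfl, rfl, h⟩
        dsimp only
        rw [if_pos hP]
  have decode : ∀ (x y : V) (p : C), p ∈ codes x → p ∈ codes y → BallEquiv T φ l x y := by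
    rintro x y p ⟨f, hfinj, hfcen, hfcol, hfnone, hfadj⟩ ⟨g, hginj, hgcen, hgcol, hgnone, hgadj⟩
    have hrange : ∀ v, ∃ w, g w = f v := by
      intro v
      by_contra h
      push_neg at h
      have h1 := hgnone (f v) h
      rw [hfcol v] at h1
      simp at h1
    have hrange' : ∀ w, ∃ v, f v = g w := by
      intro w
      by_contra h
      push_neg at h
      have h1 := hfnone (g w) h
      rw [hgcol w] at h1
      simp at h1
    let e : {v : V // T.dist x v ≤ l} → {v : V // T.dist y v ≤ l} :=
      fun v => Classical.choose (hrange v)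
    have hge : ∀ v, g (e v) = f v := fun v => Classical.choose_spec (hrange v)
    have heinj : Function.Injective e := by
      intro v1 v2 he
      apply hfinj
      rw [← hge v1, ← hge v2, he]
    have hesurj : Function.Surjective e := by
      intro w
      obtain ⟨v, hv⟩ := hrange' w
      refine ⟨v, hginj ?_⟩
      rw [hge v, hv]
    have hbij : Function.Bijective e := ⟨heinj, hesurj⟩
    refine ⟨Equiv.ofBijective e hbij, ?_, ?_, ?_⟩
    · have h1 : g (e ⟨x, by simp [SimpleGraph.dist_self]⟩) =
          g ⟨y, by simp [SimpleGraph.dist_self]⟩ := by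
        rw [hge, hfcen, hgcen]
      have h2 := hginj h1
      simp only [Equiv.ofBijective_apply]
      rw [h2]
    · intro u w
      simp only [Equiv.ofBijective_apply]
      rw [← hfadj u w, ← hge u, ← hge w]
      exact hgadj (e u) (e w)
    · intro v
      simp only [Equiv.ofBijective_apply]
      have h1 : p.2.1 (g (e v)) = some (φ ((e v : _) : V)) := hgcol (e v)
      rw [hge v, hfcol v] at h1
      exact (Option.some.injEq _ _ ▸ h1).symm
  haveI : Finite (Option A) := Finite.of_equiv (A ⊕ Unit) (Equiv.optionEquivSumPUnit A).symm
  haveI : Finite C :=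
    inferInstanceAs (Finite (Fin s × (Fin s → Option A) × (Fin s → Fin s → Bool)))
  have hinj : Function.Injective (Quot.lift codes inv) := by
    intro q1 q2 h
    induction q1 using Quot.ind with | _ x =>
    induction q2 using Quot.ind with | _ y =>
    obtain ⟨p, hp⟩ := nonempty x
    have hp' : p ∈ codes y := by
      have hcx : Quot.lift codes inv (Quot.mk _ x) = codes x := rfl
      have hcy : Quot.lift codes inv (Quot.mk _ y) = codes y := rfl
      rw [hcx, hcy] at h
      rw [← h]
      exact hp
    exact Quot.sound (decode x y p hp hp')
  exact Finite.of_injective _ hinj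

end Counting

end Stmt7Aux

theorem stmt_7 {V A : Type*} (T : SimpleGraph V) (φ : V → A) (k : ℕ)
    (hk : 2 ≤ k) (htree : T.IsTree) (hreg : ∀ v : V, (T.neighborSet v).ncard = k)
    (l : ℕ) (hsp : ∃ x0 : V, IsSpecial T φ l x0) :
    (∀ x : V, ∃ M : ℕ, ∀ x' : V, BallEquiv T φ l x x' →
      ∃ w : V, T.dist x' w ≤ M ∧ IsSpecial T φ l w) ∧
    (Finite A → ∃ N : ℕ, ∀ x : V, ∃ w : V, T.dist x w ≤ N ∧ IsSpecial T φ l w) := by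
  classical
  obtain ⟨x0, hx0⟩ := hsp
  have hc : T.Connected := htree.isConnected
  have ha : T.IsAcyclic := htree.IsAcyclic
  constructor
  · intro x
    refine ⟨T.dist x x0, fun x' h => ?_⟩
    exact Stmt7Aux.main_transport hc ha (T.dist x x0) x x' x0 le_rfl h hx0
  · intro hA
    haveI := hA
    haveI : Finite (Quot (BallEquiv T φ l)) := Stmt7Aux.finite_quot hc hk hreg l
    haveI := Fintype.ofFinite (Quot (BallEquiv T φ l))
    refine ⟨Finset.univ.sup (fun c : Quot (BallEquiv T φ l) => T.dist (Quot.out c) x0),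
      fun x => ?_⟩
    set c := Quot.mk (BallEquiv T φ l) x with hc'
    have hout : BallEquiv T φ l c.out x := by
      have h1 : Quot.mk (BallEquiv T φ l) c.out = Quot.mk (BallEquiv T φ l) x := by
        rw [Quot.out_eq, hc']
      exact ((Stmt7Aux.ballEquiv_equivalence l).eqvGen_iff).mp (Quot.eq.mp h1)
    have hle : T.dist c.out x0 ≤
        Finset.univ.sup (fun c : Quot (BallEquiv T φ l) => T.dist (Quot.out c) x0) :=
      Finset.le_sup (f := fun c : Quot (BallEquiv T φ l) => T.dist (Quot.out c) x0)
        (Finset.mem_univ c)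
    obtain ⟨w, hw1, hw2⟩ :=
      Stmt7Aux.main_transport hc ha (T.dist c.out x0) c.out x x0 le_rfl hout hx0
    exact ⟨w, le_trans hw1 hle, hw2⟩
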